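/- Let R be a commutative noetherian ring, let 𝔞 and 𝔟 be ideals of R, and let 𝒮 be a Serre subcategory of R-modules. Then 𝒮 satisfies both the C_𝔞 and C_𝔟 conditions if and only if 𝒮 satisfies both the C_{𝔞+𝔟} and C_{𝔞𝔟} conditions, where 𝔞𝔟 is the product ideal. -/

import Mathlib

universe u

open Submodule

variable {R : Type u} [CommRing R]

/-- `Γ_a(M)`, the `a`-torsion submodule of `M`: the set of elements annihilated by
some power of the ideal `a`. -/
def torsionGamma (a : Ideal R) (M : Type u) [AddCommGroup M] [Module R M] :
    Submodule R M :=
  ⨆ n : ℕ, Submodule.torsionBySet R M ((a ^ n : Ideal R) : Set R)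

/-- The class `S` satisfies the condition `C_a` on the module `M`:
if `Γ_a(M) = M` and `(0 :_M a) ∈ S` then `M ∈ S`. -/
def CCondOn (S : ModuleCat.{u} R → Prop) (a : Ideal R) (M : ModuleCat.{u} R) : Prop :=
  torsionGamma a M = ⊤ →
    S (ModuleCat.of R (Submodule.torsionBySet R M (a : Set R))) → S M

/-- The class `S` satisfies the condition `C_a` (on every `R`-module). -/
def CCond (S : ModuleCat.{u} R → Prop) (a : Ideal R) : Prop :=
  ∀ M : ModuleCat.{u} R, CCondOn S a M

/-- The class `S` is closed under isomorphisms of `R`-modules. -/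
def IsoClosed (S : ModuleCat.{u} R → Prop) : Prop :=
  ∀ ⦃M N : ModuleCat.{u} R⦄, (M ≃ₗ[R] N) → S M → S N

/-- `S` is a Serre subcategory of the category of `R`-modules: it is closed under
isomorphisms, contains the zero module, and is closed under submodules, quotient modules
and extensions. -/
structure IsSerreClass (S : ModuleCat.{u} R → Prop) : Prop where
  iso : IsoClosed S
  zero : ∀ M : ModuleCat.{u} R, Subsingleton M → S M
  subobj : ∀ (M : ModuleCat.{u} R) (N : Submodule R M), S M → S (ModuleCat.of R N)
  quot : ∀ (M : ModuleCat.{u} R) (N : Submodule R M), S M → S (ModuleCat.of R (M ⧸ N))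
  extension : ∀ (M : ModuleCat.{u} R) (N : Submodule R M),
    S (ModuleCat.of R N) → S (ModuleCat.of R (M ⧸ N)) → S M

section Infra
variable {S : ModuleCat.{u} R → Prop}

lemma serre_inj (hS : IsSerreClass S) {A B : Type u} [AddCommGroup A] [Module R A]
    [AddCommGroup B] [Module R B]
    (f : A →ₗ[R] B) (hf : Function.Injective f) (hB : S (ModuleCat.of R B)) :
    S (ModuleCat.of R A) := by
  have h1 : S (ModuleCat.of R (LinearMap.range f)) :=
    hS.subobj (ModuleCat.of R B) (LinearMap.range f) hB
  exact hS.iso (M := ModuleCat.of R (LinearMap.range f)) (N := ModuleCat.of R A)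
    (LinearEquiv.ofInjective f hf).symm h1

lemma serre_surj (hS : IsSerreClass S) {A B : Type u} [AddCommGroup A] [Module R A]
    [AddCommGroup B] [Module R B]
    (f : A →ₗ[R] B) (hf : Function.Surjective f) (hA : S (ModuleCat.of R A)) :
    S (ModuleCat.of R B) :=
  hS.iso (M := ModuleCat.of R (A ⧸ LinearMap.ker f)) (N := ModuleCat.of R B)
    (f.quotKerEquivOfSurjective hf)
    (hS.quot (ModuleCat.of R A) (LinearMap.ker f) hA)

lemma mem_torsionBySet_subtype_iff {M : Type u} [AddCommGroup M] [Module R M]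
    {N : Submodule R M} (s : Set R) (x : N) :
    x ∈ torsionBySet R N s ↔ (x : M) ∈ torsionBySet R M s := by
  simp only [mem_torsionBySet_iff]
  constructor
  · intro h r
    have := congrArg (Subtype.val) (h r)
    simpa using this
  · intro h r
    ext
    simpa using h r

lemma mem_torsionGamma_iff {M : Type u} [AddCommGroup M] [Module R M] {a : Ideal R} {x : M} :
    x ∈ torsionGamma a M ↔ ∃ n : ℕ, x ∈ torsionBySet R M ((a ^ n : Ideal R) : Set R) := by
  refine Submodule.mem_iSup_of_directed _ (fun m n => ⟨m + n, ?_, ?_⟩)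
  · exact torsionBySet_le_torsionBySet_of_subset
      (Ideal.pow_le_pow_right (Nat.le_add_right m n))
  · exact torsionBySet_le_torsionBySet_of_subset
      (Ideal.pow_le_pow_right (Nat.le_add_left n m))

lemma torsionGamma_anti {M : Type u} [AddCommGroup M] [Module R M] {c d : Ideal R}
    (h : c ≤ d) : torsionGamma d M ≤ torsionGamma c M := by
  refine iSup_mono fun n => torsionBySet_le_torsionBySet_of_subset ?_
  show ((c ^ n : Ideal R) : Set R) ⊆ ((d ^ n : Ideal R) : Set R)
  have : c ^ n ≤ d ^ n := by
    induction n with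
    | zero => simp
    | succ n ih => rw [pow_succ, pow_succ]; exact Ideal.mul_mono ih h
  exact this

end Infra

lemma mem_torsionBySet_iff' {M : Type u} [AddCommGroup M] [Module R M] {s : Set R} {x : M} :
    x ∈ torsionBySet R M s ↔ ∀ r ∈ s, r • x = 0 := by
  rw [mem_torsionBySet_iff]
  exact ⟨fun h r hr => h ⟨r, hr⟩, fun h r => h r r.2⟩

lemma serre_chain {S : ModuleCat.{u} R → Prop} (hS : IsSerreClass S)
    {M : Type u} [AddCommGroup M] [Module R M]
    (Z : Submodule R M) (hZ : S (ModuleCat.of R Z)) :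
    ∀ (t : Finset R) (X : Submodule R M),
      (∀ r ∈ t, ∀ x ∈ X, r • x ∈ Z) →
      S (ModuleCat.of R (X ⊓ torsionBySet R M (↑t : Set R) : Submodule R M)) →
      S (ModuleCat.of R X) := by
  classical
  intro t
  induction t using Finset.induction_on with
  | empty =>
    intro X _ hbase
    have he : X ⊓ torsionBySet R M ((∅ : Finset R) : Set R) = X := by
      rw [inf_eq_left]
      intro x _
      rw [mem_torsionBySet_iff']
      simp
    rwa [he] at hbase
  | @insert r t hrt ih =>
    intro X hmap hbase
    set X' : Submodule R M := X ⊓ torsionBySet R M ({r} : Set R) with hX'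
    have hX'le : X' ≤ X := inf_le_left
    have hSX' : S (ModuleCat.of R X') := by
      apply ih X' (fun s hs x hx => hmap s (Finset.mem_insert_of_mem hs) x (hX'le hx))
      have he : X' ⊓ torsionBySet R M (↑t : Set R)
          = X ⊓ torsionBySet R M ((insert r t : Finset R) : Set R) := by
        rw [hX', inf_assoc]
        congr 1
        ext x
        simp only [Submodule.mem_inf, mem_torsionBySet_iff', Set.mem_singleton_iff,
          Finset.coe_insert, Set.mem_insert_iff, Finset.mem_coe]
        constructor
        · rintro ⟨h1, h2⟩ s (rfl | hs)
          · exact h1 s rfl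
          · exact h2 s hs
        · intro h
          exact ⟨fun s hs => h s (Or.inl hs), fun s hs => h s (Or.inr hs)⟩
      rwa [he]
    have hr : r ∈ insert r t := Finset.mem_insert_self r t
    let f : X →ₗ[R] Z :=
      { toFun := fun x => ⟨r • (x : M), hmap r hr x x.2⟩
        map_add' := by intro x y; ext; simp [smul_add]
        map_smul' := by intro c x; ext; simp [smul_comm r c] }
    have hker : LinearMap.ker f = comap X.subtype X' := by
      ext x
      simp only [LinearMap.mem_ker, Submodule.mem_comap, Submodule.coe_subtype, hX',
        Submodule.mem_inf, mem_torsionBySet_iff', Set.mem_singleton_iff]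
      constructor
      · intro h
        refine ⟨x.2, fun s hs => ?_⟩
        subst hs
        exact congrArg Subtype.val h
      · intro h
        ext
        exact h.2 r rfl
    have hSker : S (ModuleCat.of R (LinearMap.ker f)) := by
      rw [hker]
      exact hS.iso (M := ModuleCat.of R X') (N := ModuleCat.of R (comap X.subtype X'))
        (Submodule.comapSubtypeEquivOfLe hX'le).symm hSX'
    have hSquot : S (ModuleCat.of R ((X : Type u) ⧸ LinearMap.ker f)) := by
      have h1 : S (ModuleCat.of R (LinearMap.range f)) :=
        hS.subobj (ModuleCat.of R Z) (LinearMap.range f) hZ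
      exact hS.iso (M := ModuleCat.of R (LinearMap.range f))
        (N := ModuleCat.of R ((X : Type u) ⧸ LinearMap.ker f))
        (f.quotKerEquivRange).symm h1
    exact hS.extension (ModuleCat.of R X) (LinearMap.ker f) hSker hSquot

lemma serre_sub_embed {S : ModuleCat.{u} R → Prop} (hS : IsSerreClass S)
    {M : Type u} [AddCommGroup M] [Module R M] {P Q : Submodule R M} (h : P ≤ Q)
    (hQ : S (ModuleCat.of R Q)) : S (ModuleCat.of R P) :=
  serre_inj hS (Submodule.inclusion h) (Submodule.inclusion_injective h) hQ

lemma serre_of_torsion_le {S : ModuleCat.{u} R → Prop} (hS : IsSerreClass S)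
    {M : Type u} [AddCommGroup M] [Module R M] {N : Submodule R M} {s : Set R}
    {P : Submodule R M} (h : N ⊓ torsionBySet R M s ≤ P) (hP : S (ModuleCat.of R P)) :
    S (ModuleCat.of R (torsionBySet R (↥N) s)) := by
  refine serre_inj hS ?_ ?_ hP
  · exact
      { toFun := fun x => ⟨(x : N), h ⟨(x : N).2, (mem_torsionBySet_subtype_iff s (x:N)).1 x.2⟩⟩
        map_add' := by intro x y; ext; simp
        map_smul' := by intro c x; ext; simp }
  · intro x y hxy
    simp only [LinearMap.coe_mk, AddHom.coe_mk, Subtype.mk.injEq] at hxy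
    exact Subtype.ext (Subtype.ext hxy)

lemma torsionGamma_subtype_eq_top {M : Type u} [AddCommGroup M] [Module R M]
    {N : Submodule R M} {c : Ideal R} (h : N ≤ torsionGamma c M) :
    torsionGamma c (↥N) = ⊤ := by
  rw [eq_top_iff']
  intro x
  rw [mem_torsionGamma_iff]
  obtain ⟨n, hn⟩ := mem_torsionGamma_iff.1 (h x.2)
  exact ⟨n, (mem_torsionBySet_subtype_iff _ x).2 hn⟩

lemma torsionBySet_le_torsionGamma {M : Type u} [AddCommGroup M] [Module R M] (c : Ideal R) :
    torsionBySet R M (c : Set R) ≤ torsionGamma c M := by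
  have := le_iSup (fun n : ℕ => torsionBySet R M ((c ^ n : Ideal R) : Set R)) 1
  simpa [torsionGamma] using this

lemma ideal_add_pow_le (a b : Ideal R) (n : ℕ) : (a + b) ^ (n + 1) ≤ a ^ (n + 1) ⊔ b := by
  induction n with
  | zero => simp [Submodule.add_eq_sup]
  | succ n ih =>
    have h1 : (a + b) ^ (n + 2) = (a + b) ^ (n + 1) * (a + b) := by ring
    rw [h1]
    calc (a + b) ^ (n + 1) * (a + b) ≤ (a ^ (n + 1) ⊔ b) * (a + b) :=
          Ideal.mul_mono ih le_rfl
      _ = a ^ (n + 1) * (a + b) ⊔ b * (a + b) := Ideal.sup_mul _ _ _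
      _ ≤ a ^ (n + 2) ⊔ b := by
          apply sup_le
          · rw [Submodule.add_eq_sup, Ideal.mul_sup]
            apply sup_le
            · exact le_sup_of_le_left (le_of_eq (pow_succ a (n + 1)).symm)
            · exact le_sup_of_le_right Ideal.mul_le_right
          · exact le_sup_of_le_right Ideal.mul_le_left

variable {S : ModuleCat.{u} R → Prop}

lemma lem_sum (hS : IsSerreClass S) {a b : Ideal R}
    (ha : CCond S a) (hb : CCond S b) : CCond S (a + b) := by
  intro M hG hsoc
  have hab_a : a ≤ a + b := by rw [Submodule.add_eq_sup]; exact le_sup_left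
  have hab_b : b ≤ a + b := by rw [Submodule.add_eq_sup]; exact le_sup_right
  -- W = (0 :_M a)
  set W : Submodule R M := torsionBySet R M (a : Set R) with hW
  have hSW : S (ModuleCat.of R W) := by
    refine hb (ModuleCat.of R W) ?_ ?_
    · refine torsionGamma_subtype_eq_top (le_trans ?_ (torsionGamma_anti hab_b))
      rw [hG]
      exact le_top
    · refine serre_of_torsion_le hS (P := torsionBySet R M ((a + b : Ideal R) : Set R))
        ?_ hsoc
      intro x hx
      rw [mem_torsionBySet_iff']
      intro r hr
      rw [Submodule.add_eq_sup] at hr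
      obtain ⟨y, hy, z, hz, rfl⟩ := Submodule.mem_sup.1 hr
      have h1 : y • x = 0 := mem_torsionBySet_iff'.1 hx.1 y hy
      have h2 : z • x = 0 := mem_torsionBySet_iff'.1 hx.2 z hz
      rw [add_smul, h1, h2, add_zero]
  exact ha M (top_le_iff.1 (hG ▸ torsionGamma_anti hab_a)) hSW

lemma lem_prod [IsNoetherianRing R] (hS : IsSerreClass S) {a b : Ideal R}
    (ha : CCond S a) (hb : CCond S b) : CCond S (a * b) := by
  intro M hG hsoc
  have hmul_a : a * b ≤ a := Ideal.mul_le_left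
  have hmul_b : a * b ≤ b := Ideal.mul_le_right
  set N : Submodule R M := torsionGamma a M with hN
  -- (i) S (of N)
  have hSN : S (ModuleCat.of R N) := by
    refine ha (ModuleCat.of R N) (torsionGamma_subtype_eq_top le_rfl) ?_
    refine serre_of_torsion_le hS (P := torsionBySet R M ((a * b : Ideal R) : Set R)) ?_ hsoc
    exact le_trans inf_le_right (torsionBySet_le_torsionBySet_of_subset hmul_a)
  -- Q = Γ_b(M) ∈ S
  have hSQ : S (ModuleCat.of R (torsionGamma b M)) := by
    refine hb (ModuleCat.of R (torsionGamma b M)) (torsionGamma_subtype_eq_top le_rfl) ?_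
    refine serre_of_torsion_le hS (P := torsionBySet R M ((a * b : Ideal R) : Set R)) ?_ hsoc
    exact le_trans inf_le_right (torsionBySet_le_torsionBySet_of_subset hmul_b)
  -- (0 :_M b) ∈ S
  have hStbB : S (ModuleCat.of R (torsionBySet R M (b : Set R))) :=
    serre_sub_embed hS (torsionBySet_le_torsionGamma b) hSQ
  -- L = preimage of (0 :_{M/N} b)
  set K : Submodule R (M ⧸ N) := torsionBySet R (M ⧸ N) (b : Set R) with hK
  set L : Submodule R M := Submodule.comap N.mkQ K with hL
  have hmemL : ∀ x : M, x ∈ L ↔ ∀ r ∈ b, r • x ∈ N := by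
    intro x
    simp only [hL, Submodule.mem_comap, hK, mem_torsionBySet_iff']
    constructor
    · intro h r hr
      have := h r hr
      rwa [← map_smul, Submodule.mkQ_apply, Submodule.Quotient.mk_eq_zero] at this
    · intro h r hr
      have := h r hr
      rwa [← Submodule.Quotient.mk_eq_zero, ← Submodule.mkQ_apply, map_smul] at this
  obtain ⟨t, ht⟩ : b.FG := IsNoetherian.noetherian b
  have hSL : S (ModuleCat.of R L) := by
    refine serre_chain hS N hSN t L ?_ ?_
    · intro r hr x hx
      exact (hmemL x).1 hx r (ht ▸ Ideal.subset_span hr)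
    · have he : L ⊓ torsionBySet R M (↑t : Set R) = torsionBySet R M (b : Set R) := by
        have h1 : torsionBySet R M (↑t : Set R) = torsionBySet R M (b : Set R) := by
          rw [torsionBySet_eq_torsionBySet_span, ht]
        rw [h1, inf_eq_right]
        intro x hx
        rw [hmemL]
        intro r hr
        rw [mem_torsionBySet_iff'.1 hx r hr]
        exact zero_mem N
      rw [he]
      exact hStbB
  -- K ∈ S via surjection L → K
  have hSK : S (ModuleCat.of R K) := by
    refine serre_surj hS (A := L) ?_ ?_ hSL
    · exact
        { toFun := fun x => ⟨N.mkQ (x : M), x.2⟩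
          map_add' := by intro x y; ext; simp
          map_smul' := by intro c x; ext; simp }
    · rintro ⟨k, hk⟩
      obtain ⟨x, rfl⟩ := N.mkQ_surjective k
      exact ⟨⟨x, hk⟩, rfl⟩
  -- M/N is b-torsion
  have hGQ : torsionGamma b (M ⧸ N) = ⊤ := by
    rw [eq_top_iff']
    intro q
    obtain ⟨x, rfl⟩ := N.mkQ_surjective q
    have hx : (x : M) ∈ torsionGamma (a * b) M := by rw [hG]; trivial
    obtain ⟨n, hn⟩ := mem_torsionGamma_iff.1 hx
    rw [mem_torsionGamma_iff]
    refine ⟨n, ?_⟩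
    rw [mem_torsionBySet_iff']
    intro s hs
    rw [← map_smul, Submodule.mkQ_apply, Submodule.Quotient.mk_eq_zero]
    have : s • x ∈ torsionBySet R M ((a ^ n : Ideal R) : Set R) := by
      rw [mem_torsionBySet_iff']
      intro r hr
      rw [smul_smul]
      refine mem_torsionBySet_iff'.1 hn (r * s) ?_
      rw [mul_pow]
      exact Ideal.mul_mem_mul hr hs
    exact (mem_torsionGamma_iff).2 ⟨n, this⟩
  have hSQuot : S (ModuleCat.of R (M ⧸ N)) := hb (ModuleCat.of R (M ⧸ N)) hGQ hSK
  exact hS.extension M N hSN hSQuot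

lemma lem_rev [IsNoetherianRing R] (hS : IsSerreClass S) {a b : Ideal R}
    (hsum : CCond S (a + b)) (hmul : CCond S (a * b)) : CCond S a := by
  intro M hG hsoc
  have hab_a : a ≤ a + b := by rw [Submodule.add_eq_sup]; exact le_sup_left
  -- Z = (0 :_M b) ∈ S via C_{a+b}
  set Z : Submodule R M := torsionBySet R M (b : Set R) with hZ
  have hSZ : S (ModuleCat.of R Z) := by
    refine hsum (ModuleCat.of R Z) ?_ ?_
    · refine torsionGamma_subtype_eq_top ?_
      intro x hx
      have hxa : (x : M) ∈ torsionGamma a M := by rw [hG]; trivial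
      obtain ⟨n, hn⟩ := mem_torsionGamma_iff.1 hxa
      rw [mem_torsionGamma_iff]
      refine ⟨n + 1, ?_⟩
      rw [mem_torsionBySet_iff']
      intro r hr
      have hr' : r ∈ a ^ (n + 1) ⊔ b := ideal_add_pow_le a b n hr
      obtain ⟨y, hy, z, hz, rfl⟩ := Submodule.mem_sup.1 hr'
      have h1 : y • x = 0 :=
        mem_torsionBySet_iff'.1 hn y (Ideal.pow_le_pow_right (Nat.le_succ n) hy)
      have h2 : z • x = 0 := mem_torsionBySet_iff'.1 hx z hz
      rw [add_smul, h1, h2, add_zero]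
    · refine serre_of_torsion_le hS (P := torsionBySet R M (a : Set R)) ?_ hsoc
      refine le_trans inf_le_right (torsionBySet_le_torsionBySet_of_subset ?_)
      exact hab_a
  -- X = (0 :_M ab) ∈ S via chain lemma
  set X : Submodule R M := torsionBySet R M ((a * b : Ideal R) : Set R) with hX
  obtain ⟨t, ht⟩ : a.FG := IsNoetherian.noetherian a
  have hSX : S (ModuleCat.of R X) := by
    refine serre_chain hS Z hSZ t X ?_ ?_
    · intro r hr x hx
      have hra : r ∈ a := ht ▸ Ideal.subset_span hr
      rw [hZ, mem_torsionBySet_iff']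
      intro s hs
      rw [smul_smul, mul_comm s r]
      exact mem_torsionBySet_iff'.1 hx (r * s) (Ideal.mul_mem_mul hra hs)
    · have he : X ⊓ torsionBySet R M (↑t : Set R) = torsionBySet R M (a : Set R) := by
        have h1 : torsionBySet R M (↑t : Set R) = torsionBySet R M (a : Set R) := by
          rw [torsionBySet_eq_torsionBySet_span, ht]
        rw [h1, inf_eq_right]
        exact torsionBySet_le_torsionBySet_of_subset Ideal.mul_le_left
      rw [he]
      exact hsoc
  refine hmul M (top_le_iff.1 ?_) hSX
  rw [← hG]
  exact torsionGamma_anti Ideal.mul_le_left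

/-- A Serre subcategory `S` satisfies both `C_a` and `C_b` if and only if it satisfies
both `C_{a+b}` and `C_{ab}`. -/
theorem stmt7 [IsNoetherianRing R] (a b : Ideal R)
    (S : ModuleCat.{u} R → Prop)
    (hS : IsSerreClass S) :
    (CCond S a ∧ CCond S b) ↔ (CCond S (a + b) ∧ CCond S (a * b)) := by
  constructor
  · rintro ⟨ha, hb⟩
    exact ⟨lem_sum hS ha hb, lem_prod hS ha hb⟩
  · rintro ⟨hsum, hmul⟩
    exact ⟨lem_rev hS hsum hmul,
      lem_rev hS (a := b) (b := a) (by rwa [add_comm]) (by rwa [mul_comm])⟩
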